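/- The partial Cayley transform Φ(W,η) = (i(I_n+W)(I_n−W)⁻¹, 2iη(I_n−W)⁻¹) from 𝔻_{n,m} to ℍ_{n,m} is a bijection with inverse Φ⁻¹(Ω,Z) = ((Ω−iI_n)(Ω+iI_n)⁻¹, Z(Ω+iI_n)⁻¹). -/

import Mathlib

open Matrix Complex
open scoped ComplexOrder

/-- Entrywise conjugate of a complex matrix. -/
def conjMat {k l : Type*} (M : Matrix k l ℂ) : Matrix k l ℂ :=
  M.map (starRingEnd ℂ)

/-- Entrywise imaginary part of a complex matrix. -/
def imMat {n : ℕ} (Ω : Matrix (Fin n) (Fin n) ℂ) : Matrix (Fin n) (Fin n) ℝ :=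
  Matrix.of fun i j => (Ω i j).im

/-- Membership in the generalized unit disk `𝔻_n`. -/
def InDisk {n : ℕ} (W : Matrix (Fin n) (Fin n) ℂ) : Prop :=
  W = Wᵀ ∧ (1 - conjMat W * W).PosDef

/-- Membership in the Siegel upper half plane `ℍ_n`. -/
def InSiegel {n : ℕ} (Ω : Matrix (Fin n) (Fin n) ℂ) : Prop :=
  Ωᵀ = Ω ∧ (imMat Ω).PosDef

/-- The partial Cayley transform `Φ : 𝔻_{n,m} → ℍ_{n,m}`. -/
noncomputable def cayley {n m : ℕ}
    (p : Matrix (Fin n) (Fin n) ℂ × Matrix (Fin m) (Fin n) ℂ) :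
    Matrix (Fin n) (Fin n) ℂ × Matrix (Fin m) (Fin n) ℂ :=
  (Complex.I • ((1 + p.1) * (1 - p.1)⁻¹), (2 * Complex.I) • (p.2 * (1 - p.1)⁻¹))

/-- The inverse partial Cayley transform `Φ⁻¹ : ℍ_{n,m} → 𝔻_{n,m}`. -/
noncomputable def cayleyInv {n m : ℕ}
    (p : Matrix (Fin n) (Fin n) ℂ × Matrix (Fin m) (Fin n) ℂ) :
    Matrix (Fin n) (Fin n) ℂ × Matrix (Fin m) (Fin n) ℂ :=
  ((p.1 - Complex.I • 1) * (p.1 + Complex.I • 1)⁻¹, p.2 * (p.1 + Complex.I • 1)⁻¹)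

section Helpers

variable {n : ℕ}

lemma two_I_ne : (2 * Complex.I) ≠ 0 := by simp [Complex.I_ne_zero]

lemma conjMat_eq {W : Matrix (Fin n) (Fin n) ℂ} (h : Wᵀ = W) : conjMat W = Wᴴ := by
  rw [conjTranspose, h]; rfl

lemma sub_conjMat (Ω : Matrix (Fin n) (Fin n) ℂ) :
    Ω - conjMat Ω = (2 * Complex.I) • ((imMat Ω).map Complex.ofReal) := by
  ext i j
  simp only [Matrix.sub_apply, conjMat, Matrix.map_apply, Matrix.smul_apply, imMat,
    Matrix.of_apply, smul_eq_mul, Complex.sub_conj]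
  push_cast
  ring

lemma isUnit_of_ker {A : Matrix (Fin n) (Fin n) ℂ} (h : ∀ v, A *ᵥ v = 0 → v = 0) :
    IsUnit A := by
  rw [← Matrix.mulVec_injective_iff_isUnit]
  intro x y hxy
  exact sub_eq_zero.mp (h _ (by rw [Matrix.mulVec_sub, hxy, sub_self]))

lemma mulVec_ne_zero {A : Matrix (Fin n) (Fin n) ℂ} (hA : IsUnit A) {x : Fin n → ℂ}
    (hx : x ≠ 0) : A *ᵥ x ≠ 0 := by
  intro h
  exact hx (Matrix.mulVec_injective_iff_isUnit.mpr hA (by simpa using h))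

lemma posDef_conj_mul {A P : Matrix (Fin n) (Fin n) ℂ} (hP : P.PosDef) (hA : IsUnit A) :
    (Aᴴ * P * A).PosDef := by
  refine Matrix.PosDef.of_dotProduct_mulVec_pos (Matrix.isHermitian_conjTranspose_mul_mul A hP.1) fun x hx => ?_
  have hAx : A *ᵥ x ≠ 0 := mulVec_ne_zero hA hx
  have := hP.dotProduct_mulVec_pos hAx
  convert this using 1
  rw [← Matrix.mulVec_mulVec, ← Matrix.mulVec_mulVec, dotProduct_mulVec, ← star_mulVec]

lemma posDef_of_map {Y : Matrix (Fin n) (Fin n) ℝ}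
    (h : (Y.map Complex.ofReal).PosDef) : Y.PosDef := by
  refine Matrix.PosDef.of_dotProduct_mulVec_pos ?_ ?_
  · ext i j
    have := congrFun (congrFun h.1 i) j
    simp only [Matrix.conjTranspose_apply, Matrix.map_apply, RCLike.star_def,
      Complex.conj_ofReal] at this
    simpa [Matrix.conjTranspose_apply] using Complex.ofReal_injective this
  · intro x hx
    have hx' : (fun i => (x i : ℂ)) ≠ 0 := by
      intro hc
      exact hx (funext fun i => by
        have := congrFun hc i
        simpa using this)
    have := h.dotProduct_mulVec_pos hx'
    have key : star (fun i => (x i : ℂ)) ⬝ᵥ ((Y.map Complex.ofReal) *ᵥ fun i => (x i : ℂ))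
        = ((star x ⬝ᵥ (Y *ᵥ x) : ℝ) : ℂ) := by
      simp only [dotProduct, Matrix.mulVec, Pi.star_apply, Matrix.map_apply, star_trivial]
      push_cast
      simp [RCLike.star_def, Complex.conj_ofReal]
    rw [key] at this
    exact Complex.zero_lt_real.mp this

lemma map_posDef {Y : Matrix (Fin n) (Fin n) ℝ} (h : Y.PosDef) :
    (Y.map Complex.ofReal).PosDef := by
  obtain ⟨B, hB⟩ : ∃ B : Matrix (Fin n) (Fin n) ℝ, Y = Bᴴ * B := by
    open scoped MatrixOrder in
    obtain ⟨X, hX, -, hXY⟩ := CFC.exists_sqrt_of_isSelfAdjoint_of_quasispectrumRestricts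
      h.posSemidef.isHermitian (QuasispectrumRestricts.nnreal_of_nonneg h.posSemidef.nonneg)
    exact ⟨X, by rw [← hXY]; exact congrArg (· * X) hX.star_eq.symm⟩
  have hdet : Y.det = B.det * B.det := by
    rw [hB, Matrix.det_mul, Matrix.det_conjTranspose, star_trivial]
  have hBdet : IsUnit B.det := by
    rcases eq_or_ne B.det 0 with h0 | h0
    · exfalso; have := h.det_pos; rw [hdet, h0, mul_zero] at this; exact lt_irrefl _ this
    · exact isUnit_iff_ne_zero.mpr h0
  have hBu : IsUnit (B.map Complex.ofReal) := by
    rw [Matrix.isUnit_iff_isUnit_det,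
      show B.map Complex.ofReal = Complex.ofRealHom.mapMatrix B from rfl, ← RingHom.map_det]
    exact hBdet.map Complex.ofRealHom
  have key : Y.map Complex.ofReal
      = (B.map Complex.ofReal)ᴴ * 1 * (B.map Complex.ofReal) := by
    rw [Matrix.mul_one, hB,
      show (Bᴴ * B).map Complex.ofReal = Complex.ofRealHom.mapMatrix (Bᴴ * B) from rfl,
      _root_.map_mul, RingHom.mapMatrix_apply, RingHom.mapMatrix_apply,
      ← Matrix.conjTranspose_map Complex.ofReal (fun a => (Complex.conj_ofReal a).symm)]
    rfl
  rw [key]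
  exact posDef_conj_mul Matrix.PosDef.one hBu

lemma isUnit_one_sub {W : Matrix (Fin n) (Fin n) ℂ} (h : (1 - Wᴴ * W).PosDef) :
    IsUnit (1 - W) := by
  apply isUnit_of_ker
  intro v hv
  by_contra hv0
  have h1 : W *ᵥ v = v := by
    rw [Matrix.sub_mulVec, Matrix.one_mulVec, sub_eq_zero] at hv
    exact hv.symm
  have hq := h.dotProduct_mulVec_pos hv0
  have hz : star v ⬝ᵥ ((1 - Wᴴ * W) *ᵥ v) = 0 := by
    rw [Matrix.sub_mulVec, Matrix.one_mulVec, dotProduct_sub, ← Matrix.mulVec_mulVec, h1,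
      dotProduct_mulVec, ← star_mulVec, h1, sub_self]
  rw [hz] at hq
  exact lt_irrefl _ hq

lemma isUnit_add_I {Ω M : Matrix (Fin n) (Fin n) ℂ}
    (hrel : Ω - Ωᴴ = (2 * Complex.I) • M)
    (hM : M.PosDef) : IsUnit (Ω + Complex.I • 1) := by
  apply isUnit_of_ker
  intro v hv
  by_contra hv0
  have h1 : Ω *ᵥ v = -(Complex.I • v) := by
    rw [Matrix.add_mulVec, add_eq_zero_iff_eq_neg] at hv
    simpa [Matrix.smul_mulVec, Matrix.one_mulVec] using hv
  have hq := hM.dotProduct_mulVec_pos hv0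
  set d := star v ⬝ᵥ v with hd
  have hdot : star v ⬝ᵥ ((Ω - Ωᴴ) *ᵥ v) = (-2 * Complex.I) * d := by
    rw [Matrix.sub_mulVec, dotProduct_sub, h1, dotProduct_mulVec, ← star_mulVec, h1]
    simp only [dotProduct_neg, dotProduct_smul, star_neg, star_smul, neg_dotProduct,
      smul_dotProduct, smul_eq_mul]
    simp [Complex.conj_I]
    ring
  rw [hrel] at hdot
  have hdot2 : star v ⬝ᵥ (((2 * Complex.I) • M) *ᵥ v)
      = (2 * Complex.I) * (star v ⬝ᵥ (M *ᵥ v)) := by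
    rw [Matrix.smul_mulVec, dotProduct_smul, smul_eq_mul]
  rw [hdot2] at hdot
  have hqd : star v ⬝ᵥ (M *ᵥ v) = -d := by
    have : (2 * Complex.I) * (star v ⬝ᵥ (M *ᵥ v)) = (2 * Complex.I) * (-d) := by
      rw [hdot]; ring
    exact mul_left_cancel₀ two_I_ne this
  rw [hqd] at hq
  have hdnn : 0 ≤ d := by
    rw [hd]
    exact Finset.sum_nonneg fun i _ => star_mul_self_nonneg (v i)
  exact lt_irrefl (0:ℂ) (lt_of_lt_of_le hq (by simpa using neg_nonpos.mpr hdnn))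

lemma sandwich_add (P X Y Q : Matrix (Fin n) (Fin n) ℂ) :
    P * X * Q + P * Y * Q = P * (X + Y) * Q := by noncomm_ring

lemma sandwich_sub (P X Y Q : Matrix (Fin n) (Fin n) ℂ) :
    P * X * Q - P * Y * Q = P * (X - Y) * Q := by noncomm_ring

lemma lin_comb {E1 E2 Y : Matrix (Fin n) (Fin n) ℂ} (h : E1 + E2 = Y + Y) :
    Complex.I • E1 - (-Complex.I) • E2 = (2 * Complex.I) • Y := by
  rw [show Complex.I • E1 - (-Complex.I) • E2 = Complex.I • (E1 + E2) by module, h]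
  module

end Helpers

/-- The partial Cayley transform is a bijection from `𝔻_{n,m}` onto
`ℍ_{n,m}` with inverse `Φ⁻¹(Ω,Z) = ((Ω−iI)(Ω+iI)⁻¹, Z(Ω+iI)⁻¹)`. -/
theorem cayley_bijective {n m : ℕ} :
    (∀ p : Matrix (Fin n) (Fin n) ℂ × Matrix (Fin m) (Fin n) ℂ,
      InDisk p.1 → InSiegel (cayley p).1 ∧ cayleyInv (cayley p) = p) ∧
    (∀ p : Matrix (Fin n) (Fin n) ℂ × Matrix (Fin m) (Fin n) ℂ,
      InSiegel p.1 → InDisk (cayleyInv p).1 ∧ cayley (cayleyInv p) = p) := by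
  constructor
  · -- forward direction
    rintro ⟨W, η⟩ ⟨hsym, hpd⟩
    dsimp only at hsym hpd
    have hsym' : Wᵀ = W := hsym.symm
    rw [conjMat_eq hsym'] at hpd
    have hU : IsUnit (1 - W) := isUnit_one_sub hpd
    have hdet := (Matrix.isUnit_iff_isUnit_det _).mp hU
    simp only [cayley, cayleyInv]
    set A := (1 - W)⁻¹ with hA
    have hA1 : (1 - W) * A = 1 := Matrix.mul_nonsing_inv _ hdet
    have hA2 : A * (1 - W) = 1 := Matrix.nonsing_inv_mul _ hdet
    have hAu : IsUnit A := by
      rw [hA, Matrix.isUnit_iff_isUnit_det, Matrix.det_nonsing_inv]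
      exact isUnit_iff_ne_zero.mpr (by
        simp only [Ring.inverse_eq_inv']
        exact inv_ne_zero (isUnit_iff_ne_zero.mp hdet))
    have hAT : Aᵀ = A := by
      rw [hA, Matrix.transpose_nonsing_inv, Matrix.transpose_sub, Matrix.transpose_one, hsym']
    have hAH : Aᴴ = (1 - Wᴴ)⁻¹ := by
      rw [hA, Matrix.conjTranspose_nonsing_inv, Matrix.conjTranspose_sub,
        Matrix.conjTranspose_one]
    have hAH1 : (1 - Wᴴ) * Aᴴ = 1 := by
      have := congrArg Matrix.conjTranspose hA2
      rwa [Matrix.conjTranspose_mul, Matrix.conjTranspose_sub, Matrix.conjTranspose_one] at this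
    have hAH2 : Aᴴ * (1 - Wᴴ) = 1 := by
      have := congrArg Matrix.conjTranspose hA1
      rwa [Matrix.conjTranspose_mul, Matrix.conjTranspose_sub, Matrix.conjTranspose_one] at this
    set Ω : Matrix (Fin n) (Fin n) ℂ := Complex.I • ((1 + W) * A) with hΩ
    have hcomm : (1 + W) * A = A * (1 + W) := by
      have e : (1 - W) * (1 + W) = (1 + W) * (1 - W) := by noncomm_ring
      calc (1 + W) * A = (A * (1 - W)) * ((1 + W) * A) := by rw [hA2, Matrix.one_mul]
        _ = A * (((1 - W) * (1 + W)) * A) := by simp only [Matrix.mul_assoc]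
        _ = A * (((1 + W) * (1 - W)) * A) := by rw [e]
        _ = (A * (1 + W)) * ((1 - W) * A) := by simp only [Matrix.mul_assoc]
        _ = A * (1 + W) := by rw [hA1, Matrix.mul_one]
    have hΩT : Ωᵀ = Ω := by
      rw [hΩ, Matrix.transpose_smul, Matrix.transpose_mul, hAT, Matrix.transpose_add,
        Matrix.transpose_one, hsym', ← hcomm]
    have hΩH : Ωᴴ = (-Complex.I) • (Aᴴ * (1 + Wᴴ)) := by
      rw [hΩ, Matrix.conjTranspose_smul, Matrix.conjTranspose_mul, Matrix.conjTranspose_add,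
        Matrix.conjTranspose_one]
      simp [Complex.conj_I]
    have hΩsub : Ω - Ωᴴ = (2 * Complex.I) • (Aᴴ * (1 - Wᴴ * W) * A) := by
      have e1 : (1 + W) * A = Aᴴ * ((1 - Wᴴ) * (1 + W)) * A := by
        calc (1 + W) * A = (Aᴴ * (1 - Wᴴ)) * ((1 + W) * A) := by rw [hAH2, Matrix.one_mul]
          _ = Aᴴ * ((1 - Wᴴ) * (1 + W)) * A := by simp only [Matrix.mul_assoc]
      have e2 : Aᴴ * (1 + Wᴴ) = Aᴴ * ((1 + Wᴴ) * (1 - W)) * A := by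
        calc Aᴴ * (1 + Wᴴ) = (Aᴴ * (1 + Wᴴ)) * ((1 - W) * A) := by rw [hA1, Matrix.mul_one]
          _ = Aᴴ * ((1 + Wᴴ) * (1 - W)) * A := by simp only [Matrix.mul_assoc]
      rw [hΩH, hΩ, e1, e2]
      apply lin_comb
      have hkey : (1 - Wᴴ) * (1 + W) + (1 + Wᴴ) * (1 - W)
          = (1 - Wᴴ * W) + (1 - Wᴴ * W) := by noncomm_ring
      calc Aᴴ * ((1 - Wᴴ) * (1 + W)) * A + Aᴴ * ((1 + Wᴴ) * (1 - W)) * A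
          = Aᴴ * ((1 - Wᴴ) * (1 + W) + (1 + Wᴴ) * (1 - W)) * A := by
            rw [sandwich_add]
        _ = Aᴴ * ((1 - Wᴴ * W) + (1 - Wᴴ * W)) * A := by rw [hkey]
        _ = Aᴴ * (1 - Wᴴ * W) * A + Aᴴ * (1 - Wᴴ * W) * A := by
            rw [sandwich_add]
    have hIm : (imMat Ω).map Complex.ofReal = Aᴴ * (1 - Wᴴ * W) * A := by
      apply smul_right_injective (Matrix (Fin n) (Fin n) ℂ) two_I_ne
      show (2 * Complex.I) • ((imMat Ω).map Complex.ofReal)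
          = (2 * Complex.I) • (Aᴴ * (1 - Wᴴ * W) * A)
      rw [← sub_conjMat, conjMat_eq hΩT, hΩsub]
    have hImPD : (imMat Ω).PosDef := posDef_of_map (by rw [hIm]; exact posDef_conj_mul hpd hAu)
    -- the algebraic inverse computations
    have hsum : Ω + Complex.I • 1 = (2 * Complex.I) • A := by
      calc Ω + Complex.I • 1 = Complex.I • ((1 + W) * A) + Complex.I • ((1 - W) * A) := by
            rw [hA1]
        _ = (2 * Complex.I) • A := by
            rw [← smul_add, show (1 + W) * A + (1 - W) * A = A + A by
              simp only [Matrix.add_mul, Matrix.sub_mul, Matrix.one_mul]; abel]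
            module
    have hdiff : Ω - Complex.I • 1 = (2 * Complex.I) • (W * A) := by
      calc Ω - Complex.I • 1 = Complex.I • ((1 + W) * A) - Complex.I • ((1 - W) * A) := by
            rw [hA1]
        _ = (2 * Complex.I) • (W * A) := by
            rw [← smul_sub, show (1 + W) * A - (1 - W) * A = W * A + W * A by
              simp only [Matrix.add_mul, Matrix.sub_mul, Matrix.one_mul]; abel]
            module
    have hinv : (Ω + Complex.I • 1)⁻¹ = (2 * Complex.I)⁻¹ • (1 - W) := by
      apply inv_eq_right_inv
      rw [hsum, smul_mul_assoc, mul_smul_comm, smul_smul, hA2, mul_inv_cancel₀ two_I_ne,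
        one_smul]
    refine ⟨⟨hΩT, hImPD⟩, ?_⟩
    refine Prod.ext ?_ ?_
    · show (Ω - Complex.I • 1) * (Ω + Complex.I • 1)⁻¹ = W
      rw [hinv, hdiff, smul_mul_assoc, mul_smul_comm, smul_smul, mul_inv_cancel₀ two_I_ne,
        one_smul, Matrix.mul_assoc, hA2, Matrix.mul_one]
    · show ((2 * Complex.I) • (η * A)) * (Ω + Complex.I • 1)⁻¹ = η
      rw [hinv, Matrix.smul_mul, Matrix.mul_smul, smul_smul, mul_inv_cancel₀ two_I_ne,
        one_smul, Matrix.mul_assoc, hA2, Matrix.mul_one]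
  · -- backward direction
    rintro ⟨Ω, Z⟩ ⟨hsym, hpd⟩
    dsimp only at hsym hpd
    have hMc : ((imMat Ω).map Complex.ofReal).PosDef := map_posDef hpd
    have hrel : Ω - Ωᴴ = (2 * Complex.I) • ((imMat Ω).map Complex.ofReal) := by
      rw [← conjMat_eq hsym]; exact sub_conjMat Ω
    have hU : IsUnit (Ω + Complex.I • 1) := isUnit_add_I hrel hMc
    have hdet := (Matrix.isUnit_iff_isUnit_det _).mp hU
    simp only [cayley, cayleyInv]
    set B := (Ω + Complex.I • 1)⁻¹ with hB
    have hB1 : (Ω + Complex.I • 1) * B = 1 := Matrix.mul_nonsing_inv _ hdet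
    have hB2 : B * (Ω + Complex.I • 1) = 1 := Matrix.nonsing_inv_mul _ hdet
    have hBu : IsUnit B := by
      rw [hB, Matrix.isUnit_iff_isUnit_det, Matrix.det_nonsing_inv]
      exact isUnit_iff_ne_zero.mpr (by
        simp only [Ring.inverse_eq_inv']
        exact inv_ne_zero (isUnit_iff_ne_zero.mp hdet))
    have hsI : (Complex.I • (1 : Matrix (Fin n) (Fin n) ℂ))ᵀ = Complex.I • 1 := by
      rw [Matrix.transpose_smul, Matrix.transpose_one]
    have hsIH : (Complex.I • (1 : Matrix (Fin n) (Fin n) ℂ))ᴴ = -(Complex.I • 1) := by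
      rw [Matrix.conjTranspose_smul, Matrix.conjTranspose_one]
      simp [Complex.conj_I]
    have hBT : Bᵀ = B := by
      rw [hB, Matrix.transpose_nonsing_inv, Matrix.transpose_add, hsI, hsym]
    have hBH1 : (Ωᴴ - Complex.I • 1) * Bᴴ = 1 := by
      have := congrArg Matrix.conjTranspose hB2
      rwa [Matrix.conjTranspose_mul, Matrix.conjTranspose_add, hsIH,
        Matrix.conjTranspose_one, ← sub_eq_add_neg] at this
    have hBH2 : Bᴴ * (Ωᴴ - Complex.I • 1) = 1 := by
      have := congrArg Matrix.conjTranspose hB1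
      rwa [Matrix.conjTranspose_mul, Matrix.conjTranspose_add, hsIH,
        Matrix.conjTranspose_one, ← sub_eq_add_neg] at this
    set W : Matrix (Fin n) (Fin n) ℂ := (Ω - Complex.I • 1) * B with hW
    have hWH : Wᴴ = Bᴴ * (Ωᴴ + Complex.I • 1) := by
      rw [hW, Matrix.conjTranspose_mul, Matrix.conjTranspose_sub, hsIH, sub_neg_eq_add]
    have ecomm : (Ω + Complex.I • 1) * (Ω - Complex.I • 1)
        = (Ω - Complex.I • 1) * (Ω + Complex.I • 1) := by
      simp only [Matrix.add_mul, Matrix.mul_add, Matrix.sub_mul, Matrix.mul_sub,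
        smul_mul_assoc, mul_smul_comm, Matrix.one_mul, Matrix.mul_one]
      module
    have hcomm : (Ω - Complex.I • 1) * B = B * (Ω - Complex.I • 1) := by
      calc (Ω - Complex.I • 1) * B
          = (B * (Ω + Complex.I • 1)) * ((Ω - Complex.I • 1) * B) := by
            rw [hB2, Matrix.one_mul]
        _ = B * (((Ω + Complex.I • 1) * (Ω - Complex.I • 1)) * B) := by
            simp only [Matrix.mul_assoc]
        _ = B * (((Ω - Complex.I • 1) * (Ω + Complex.I • 1)) * B) := by rw [ecomm]
        _ = (B * (Ω - Complex.I • 1)) * ((Ω + Complex.I • 1) * B) := by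
            simp only [Matrix.mul_assoc]
        _ = B * (Ω - Complex.I • 1) := by rw [hB1, Matrix.mul_one]
    have hWT : W = Wᵀ := by
      rw [hW, Matrix.transpose_mul, hBT, Matrix.transpose_sub, hsI, hsym, ← hcomm]
    have hDkey : (Ωᴴ - Complex.I • 1) * (Ω + Complex.I • 1)
        - (Ωᴴ + Complex.I • 1) * (Ω - Complex.I • 1)
        = (4 : ℂ) • ((imMat Ω).map Complex.ofReal) := by
      have expand : (Ωᴴ - Complex.I • 1) * (Ω + Complex.I • 1)
          - (Ωᴴ + Complex.I • 1) * (Ω - Complex.I • 1)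
          = (-2 * Complex.I) • (Ω - Ωᴴ) := by
        simp only [Matrix.add_mul, Matrix.mul_add, Matrix.sub_mul, Matrix.mul_sub,
          smul_mul_assoc, mul_smul_comm, Matrix.one_mul, Matrix.mul_one, smul_smul,
          Complex.I_mul_I]
        module
      rw [expand, hrel, smul_smul,
        show (-2 * Complex.I) * (2 * Complex.I) = (4 : ℂ) by ring_nf; simp [Complex.I_sq]]
    have hkey : 1 - Wᴴ * W
        = ((2 : ℂ) • B)ᴴ * ((imMat Ω).map Complex.ofReal) * ((2 : ℂ) • B) := by
      have e1 : (1 : Matrix (Fin n) (Fin n) ℂ)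
          = Bᴴ * ((Ωᴴ - Complex.I • 1) * (Ω + Complex.I • 1)) * B := by
        calc (1 : Matrix (Fin n) (Fin n) ℂ)
            = (Bᴴ * (Ωᴴ - Complex.I • 1)) * ((Ω + Complex.I • 1) * B) := by
              rw [hBH2, hB1, Matrix.one_mul]
          _ = Bᴴ * ((Ωᴴ - Complex.I • 1) * (Ω + Complex.I • 1)) * B := by
              simp only [Matrix.mul_assoc]
      have e2 : Wᴴ * W = Bᴴ * ((Ωᴴ + Complex.I • 1) * (Ω - Complex.I • 1)) * B := by
        rw [hWH, hW]
        simp only [Matrix.mul_assoc]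
      calc 1 - Wᴴ * W
          = Bᴴ * ((Ωᴴ - Complex.I • 1) * (Ω + Complex.I • 1)) * B
            - Bᴴ * ((Ωᴴ + Complex.I • 1) * (Ω - Complex.I • 1)) * B := by rw [← e1, ← e2]
        _ = Bᴴ * ((Ωᴴ - Complex.I • 1) * (Ω + Complex.I • 1)
            - (Ωᴴ + Complex.I • 1) * (Ω - Complex.I • 1)) * B := by
              rw [sandwich_sub]
        _ = Bᴴ * ((4 : ℂ) • ((imMat Ω).map Complex.ofReal)) * B := by rw [hDkey]
        _ = ((2 : ℂ) • B)ᴴ * ((imMat Ω).map Complex.ofReal) * ((2 : ℂ) • B) := by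
              rw [Matrix.conjTranspose_smul]
              simp only [smul_mul_assoc, mul_smul_comm, smul_smul]
              norm_num
    have h2Bu : IsUnit ((2 : ℂ) • B) := by
      rw [Matrix.isUnit_iff_isUnit_det, Matrix.det_smul]
      exact (isUnit_iff_ne_zero.mpr (pow_ne_zero _ two_ne_zero)).mul
        ((Matrix.isUnit_iff_isUnit_det _).mp hBu)
    have hWpd : (1 - conjMat W * W).PosDef := by
      rw [conjMat_eq hWT.symm, hkey]
      exact posDef_conj_mul hMc h2Bu
    refine ⟨⟨hWT, hWpd⟩, ?_⟩
    have h1mW : 1 - W = (2 * Complex.I) • B := by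
      calc (1 : Matrix (Fin n) (Fin n) ℂ) - W
          = (Ω + Complex.I • 1) * B - (Ω - Complex.I • 1) * B := by rw [hB1, hW]
        _ = (2 * Complex.I) • B := by
            simp only [Matrix.add_mul, Matrix.sub_mul, smul_mul_assoc, Matrix.one_mul]
            module
    have h1pW : 1 + W = Ω * B + Ω * B := by
      calc (1 : Matrix (Fin n) (Fin n) ℂ) + W
          = (Ω + Complex.I • 1) * B + (Ω - Complex.I • 1) * B := by rw [hB1, hW]
        _ = Ω * B + Ω * B := by
            simp only [Matrix.add_mul, Matrix.sub_mul, smul_mul_assoc, Matrix.one_mul]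
            module
    have hinv : (1 - W)⁻¹ = (2 * Complex.I)⁻¹ • (Ω + Complex.I • 1) := by
      apply inv_eq_right_inv
      rw [h1mW, smul_mul_assoc, mul_smul_comm, smul_smul, hB2, mul_inv_cancel₀ two_I_ne,
        one_smul]
    have hc : Complex.I * (2 * Complex.I)⁻¹ = 2⁻¹ := by
      field_simp
    refine Prod.ext ?_ ?_
    · show Complex.I • ((1 + W) * (1 - W)⁻¹) = Ω
      rw [hinv, h1pW, Matrix.add_mul, mul_smul_comm, Matrix.mul_assoc, hB2, Matrix.mul_one,
        ← smul_add, smul_smul, hc]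
      module
    · show (2 * Complex.I) • ((Z * B) * (1 - W)⁻¹) = Z
      rw [hinv, Matrix.mul_smul, smul_smul, mul_inv_cancel₀ two_I_ne, one_smul,
        Matrix.mul_assoc, hB2, Matrix.mul_one]
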